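/- Let (T^α, ħ) be a matrix regularization of (Σ, ω) with Σ a compact closed orientable surface of Gaussian curvature K, let {K̂_α} be a matrix sequence converging to K, and let {γ̂_α} converge to γ = √g/ρ (where ω = ρ du¹∧du² and g is the determinant of the induced metric). Then the sequence χ̂_α := ħ_α Tr(γ̂_α K̂_α) converges to the Euler characteristic χ(Σ) of Σ. -/

import Mathlib

open MeasureTheory Filter Matrix Real
open scoped Topology Matrix.Norms.L2Operator

noncomputable section

/-- A matrix regularization of a compact surface `S` with symplectic volume measure `μ`
and Poisson bracket `pb`. -/
structure MatrixRegularization (S : Type*) [TopologicalSpace S] [CompactSpace S]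
    [MeasurableSpace S] (μ : Measure S)
    (pb : C(S, ℝ) → C(S, ℝ) → C(S, ℝ)) where
  Ndim : ℕ → ℕ
  Ndim_pos : ∀ α, 0 < Ndim α
  Ndim_mono : StrictMono Ndim
  T : ∀ α : ℕ, C(S, ℝ) →ₗ[ℝ] Matrix (Fin (Ndim α)) (Fin (Ndim α)) ℂ
  T_isHermitian : ∀ α f, (T α f).IsHermitian
  hbar : ℕ → ℝ
  hbar_pos : ∀ N, 0 < hbar N
  hbar_decr : ∀ m n : ℕ, m ≤ n → hbar n ≤ hbar m
  hbar_bdd : ∃ c : ℝ, Tendsto (fun N : ℕ => (N : ℝ) * hbar N) atTop (𝓝 c)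
  norm_lim : ∀ f, ∃ L : ℝ, Tendsto (fun α => ‖T α f‖) atTop (𝓝 L)
  mul_approx : ∀ f h, Tendsto (fun α => ‖T α (f * h) - T α f * T α h‖) atTop (𝓝 0)
  comm_approx : ∀ f h, Tendsto (fun α =>
      ‖((Complex.I * (hbar (Ndim α) : ℂ))⁻¹) • ⁅T α f, T α h⁆ - T α (pb f h)‖) atTop (𝓝 0)
  trace_approx : ∀ f, Tendsto (fun α => (2 * (π : ℂ) * (hbar (Ndim α) : ℂ)) * (T α f).trace)
      atTop (𝓝 ((∫ x, f x ∂μ : ℝ) : ℂ))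

namespace MatrixRegularization

variable {S : Type*} [TopologicalSpace S] [CompactSpace S] [MeasurableSpace S]
  {μ : Measure S} {pb : C(S, ℝ) → C(S, ℝ) → C(S, ℝ)}

/-- A sequence of matrices converges to the function `f`. -/
def Converges (R : MatrixRegularization S μ pb)
    (fhat : ∀ α : ℕ, Matrix (Fin (R.Ndim α)) (Fin (R.Ndim α)) ℂ) (f : C(S, ℝ)) : Prop :=
  Tendsto (fun α => ‖fhat α - R.T α f‖) atTop (𝓝 0)

/-- A unital matrix regularization. -/
def Unital (R : MatrixRegularization S μ pb) : Prop :=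
  Tendsto (fun α => ‖(1 : Matrix (Fin (R.Ndim α)) (Fin (R.Ndim α)) ℂ) - R.T α 1‖) atTop (𝓝 0)

end MatrixRegularization

lemma diag_norm_le' {n : ℕ} (A : Matrix (Fin n) (Fin n) ℂ) (i : Fin n) : ‖A i i‖ ≤ ‖A‖ := by
  have h1 := A.l2_opNorm_mulVec (EuclideanSpace.single i 1)
  rw [EuclideanSpace.norm_single, norm_one, mul_one] at h1
  set y : EuclideanSpace ℂ (Fin n) :=
    (EuclideanSpace.equiv (Fin n) ℂ).symm (A *ᵥ (EuclideanSpace.single i 1)) with hy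
  have hyi : y i = A i i := by
    show (A *ᵥ _) i = A i i
    have : ((EuclideanSpace.single i 1 : EuclideanSpace ℂ (Fin n)) : Fin n → ℂ) = Pi.single i 1 := rfl
    rw [this, Matrix.mulVec_single]; simp
  calc ‖A i i‖ = ‖(inner ℂ (EuclideanSpace.single i (1:ℂ)) y : ℂ)‖ := by
        rw [EuclideanSpace.inner_single_left]; simp [hyi]
    _ ≤ ‖EuclideanSpace.single i (1:ℂ)‖ * ‖y‖ := norm_inner_le_norm _ _
    _ ≤ ‖A‖ := by rw [EuclideanSpace.norm_single]; simpa using h1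

lemma trace_norm_le' {n : ℕ} (A : Matrix (Fin n) (Fin n) ℂ) : ‖A.trace‖ ≤ n * ‖A‖ := by
  calc ‖A.trace‖ ≤ ∑ i : Fin n, ‖A i i‖ := norm_sum_le _ _
    _ ≤ ∑ _i : Fin n, ‖A‖ := Finset.sum_le_sum fun i _ => diag_norm_le' A i
    _ = n * ‖A‖ := by simp


/-- discrete Gauss–Bonnet. Here `K` is the Gaussian curvature, `γ = √g/ρ`,
`χ` the Euler characteristic, and the classical Gauss–Bonnet theorem reads
`∫ K γ ω = ∫ K √g du dv = 2πχ`. -/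
theorem discrete_gauss_bonnet {S : Type*} [TopologicalSpace S] [CompactSpace S]
    [MeasurableSpace S] {μ : Measure S} [IsFiniteMeasure μ]
    {pb : C(S, ℝ) → C(S, ℝ) → C(S, ℝ)}
    (R : MatrixRegularization S μ pb)
    (K γ : C(S, ℝ)) (χ : ℤ)
    (hGaussBonnet : ∫ x, (K * γ) x ∂μ = 2 * π * (χ : ℝ))
    (Khat γhat : ∀ α : ℕ, Matrix (Fin (R.Ndim α)) (Fin (R.Ndim α)) ℂ)
    (hK : R.Converges Khat K) (hγ : R.Converges γhat γ) :
    Tendsto (fun α => (R.hbar (R.Ndim α) : ℂ) * (γhat α * Khat α).trace) atTop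
      (𝓝 (χ : ℂ)) := by
  obtain ⟨LK, hLK⟩ := R.norm_lim K
  obtain ⟨Lγ, hLγ⟩ := R.norm_lim γ
  obtain ⟨c, hc⟩ := R.hbar_bdd
  have hNdim : Tendsto R.Ndim atTop atTop := R.Ndim_mono.tendsto_atTop
  have hnh : Tendsto (fun α => (R.Ndim α : ℝ) * R.hbar (R.Ndim α)) atTop (𝓝 c) :=
    hc.comp hNdim
  have hmul := R.mul_approx γ K
  -- step 1: product difference tends to 0
  have hDiff : Tendsto (fun α => ‖γhat α * Khat α - R.T α (K * γ)‖) atTop (𝓝 0) := by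
    have hbound : ∀ α, ‖γhat α * Khat α - R.T α (K * γ)‖ ≤
        ‖γhat α - R.T α γ‖ * (‖Khat α - R.T α K‖ + ‖R.T α K‖)
        + ‖R.T α γ‖ * ‖Khat α - R.T α K‖
        + ‖R.T α (γ * K) - R.T α γ * R.T α K‖ := by
      intro α
      have hsplit : γhat α * Khat α - R.T α (K * γ) =
          (γhat α - R.T α γ) * Khat α + R.T α γ * (Khat α - R.T α K)
          + -(R.T α (γ * K) - R.T α γ * R.T α K) := by
        rw [mul_comm K γ]; noncomm_ring
      rw [hsplit]
      refine (norm_add_le _ _).trans (add_le_add ?_ (by rw [norm_neg]))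
      refine (norm_add_le _ _).trans (add_le_add ?_ (norm_mul_le _ _))
      refine (norm_mul_le _ _).trans ?_
      gcongr
      calc ‖Khat α‖ = ‖(Khat α - R.T α K) + R.T α K‖ := by rw [sub_add_cancel]
        _ ≤ ‖Khat α - R.T α K‖ + ‖R.T α K‖ := norm_add_le _ _
    have hg : Tendsto (fun α => ‖γhat α - R.T α γ‖ * (‖Khat α - R.T α K‖ + ‖R.T α K‖)
        + ‖R.T α γ‖ * ‖Khat α - R.T α K‖
        + ‖R.T α (γ * K) - R.T α γ * R.T α K‖) atTop (𝓝 0) := by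
      have := ((hγ.mul (hK.add hLK)).add (hLγ.mul hK)).add hmul
      simpa using this
    exact squeeze_zero (fun α => norm_nonneg _) hbound hg
  -- step 2: hbar * trace difference tends to 0
  have hTr0 : Tendsto (fun α => (R.hbar (R.Ndim α) : ℂ) *
      ((γhat α * Khat α).trace - (R.T α (K * γ)).trace)) atTop (𝓝 0) := by
    apply squeeze_zero_norm (a := fun α => ((R.Ndim α : ℝ) * R.hbar (R.Ndim α)) *
      ‖γhat α * Khat α - R.T α (K * γ)‖)
    · intro α
      have h1 : (γhat α * Khat α).trace - (R.T α (K * γ)).trace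
          = (γhat α * Khat α - R.T α (K * γ)).trace := (Matrix.trace_sub _ _).symm
      rw [norm_mul, h1, Complex.norm_real, Real.norm_eq_abs,
        abs_of_pos (R.hbar_pos _)]
      have h2 := trace_norm_le' (γhat α * Khat α - R.T α (K * γ))
      calc R.hbar (R.Ndim α) * ‖(γhat α * Khat α - R.T α (K * γ)).trace‖
          ≤ R.hbar (R.Ndim α) * ((R.Ndim α : ℝ) * ‖γhat α * Khat α - R.T α (K * γ)‖) := by
            exact mul_le_mul_of_nonneg_left h2 (R.hbar_pos _).le
        _ = (R.Ndim α : ℝ) * R.hbar (R.Ndim α) * ‖γhat α * Khat α - R.T α (K * γ)‖ := by ring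
    · simpa using hnh.mul hDiff
  -- step 3: hbar * trace of T(Kγ) tends to χ
  have hTr1 : Tendsto (fun α => (R.hbar (R.Ndim α) : ℂ) * (R.T α (K * γ)).trace) atTop
      (𝓝 (χ : ℂ)) := by
    have h2pi : (2 * (π : ℂ)) ≠ 0 := by
      simp [Complex.ofReal_ne_zero, Real.pi_ne_zero]
    have := (R.trace_approx (K * γ)).const_mul ((2 * (π : ℂ))⁻¹)
    rw [hGaussBonnet] at this
    have heq : (fun α => (2 * (π : ℂ))⁻¹ *
        ((2 * (π : ℂ) * (R.hbar (R.Ndim α) : ℂ)) * (R.T α (K * γ)).trace))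
        = fun α => (R.hbar (R.Ndim α) : ℂ) * (R.T α (K * γ)).trace := by
      funext α; field_simp
    rw [heq] at this
    convert this using 2
    push_cast
    field_simp
  have := hTr1.add hTr0
  rw [add_zero] at this
  convert this using 2 with α
  ring
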